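/- Assume condition (*). For every v ∈ V \ {0}, the limits lim_{i→∞}(f_{i+1}(v) − f_i(v)) and lim_{i→∞} i^{-1} f_i(v) both exist, they are equal, and their common value d(v) belongs to S(V). -/

import Mathlib

open Filter Topology NormedSpace
open scoped LinearAlgebra.Projectivization

set_option linter.unusedSectionVars false

noncomputable section

namespace CSW

variable {E : Type*} [NormedAddCommGroup E] [InnerProductSpace ℂ E] [FiniteDimensional ℂ E]
variable {V : Type*} [NormedAddCommGroup V] [InnerProductSpace ℂ V] [FiniteDimensional ℂ V]

/-- The exponential `e^T` of a bounded operator, as a unit (invertible element) of the algebra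
of continuous linear endomorphisms. -/
def expUnit (T : E →L[ℂ] E) : (E →L[ℂ] E)ˣ where
  val := exp T
  inv := exp (-T)
  val_inv := by
    letI : NormedAlgebra ℚ (E →L[ℂ] E) := .restrictScalars ℚ ℂ (E →L[ℂ] E)
    rw [← exp_add_of_commute (Commute.refl T).neg_right, add_neg_cancel, exp_zero]
  inv_val := by
    letI : NormedAlgebra ℚ (E →L[ℂ] E) := .restrictScalars ℚ ℂ (E →L[ℂ] E)
    rw [← exp_add_of_commute (Commute.refl T).neg_left, neg_add_cancel, exp_zero]

/-- `Bseq A i` is `B_i = A_i A_{i-1}⁻¹` (with the junk value `B_0 = 1`). -/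
def Bseq (A : ℕ → (E →L[ℂ] E)ˣ) (i : ℕ) : (E →L[ℂ] E)ˣ := A i * (A (i - 1))⁻¹

/-- Condition (*): for any subsequence, after passing to a further subsequence, `B_{α+1}` and
`B_{α+2}` both converge (in operator norm) to `g e^Λ g⁻¹` for some unitary `g`. -/
def CondStar (A : ℕ → (E →L[ℂ] E)ˣ) (Λ : E →L[ℂ] E) : Prop :=
  ∀ φ : ℕ → ℕ, StrictMono φ → ∃ ψ : ℕ → ℕ, StrictMono ψ ∧ ∃ g : (E →L[ℂ] E)ˣ,
    (g : E →L[ℂ] E) ∈ unitary (E →L[ℂ] E) ∧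
    Tendsto (fun j => (Bseq A (φ (ψ j) + 1) : E →L[ℂ] E)) atTop
      (𝓝 ((g * expUnit Λ * g⁻¹ : (E →L[ℂ] E)ˣ) : E →L[ℂ] E)) ∧
    Tendsto (fun j => (Bseq A (φ (ψ j) + 2) : E →L[ℂ] E)) atTop
      (𝓝 ((g * expUnit Λ * g⁻¹ : (E →L[ℂ] E)ˣ) : E →L[ℂ] E))

/-- Condition (*)' for a given gauge sequence `g`: `g 0 = 1`, each `g i` is unitary,
`B_i g_i e^{-Λ} g_i⁻¹ → Id` and `g_{i-1}⁻¹ g_i → Id`. -/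
def CondStar' (A : ℕ → (E →L[ℂ] E)ˣ) (Λ : E →L[ℂ] E) (g : ℕ → (E →L[ℂ] E)ˣ) : Prop :=
  g 0 = 1 ∧ (∀ i, (g i : E →L[ℂ] E) ∈ unitary (E →L[ℂ] E)) ∧
  Tendsto (fun i => ((Bseq A i * g i * expUnit (-Λ) * (g i)⁻¹ : (E →L[ℂ] E)ˣ) : E →L[ℂ] E))
    atTop (𝓝 1) ∧
  Tendsto (fun i => (((g (i - 1))⁻¹ * g i : (E →L[ℂ] E)ˣ) : E →L[ℂ] E)) atTop (𝓝 1)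

/-- Membership in `G_Λ = {g ∈ G : g Λ g⁻¹ = Λ}`. -/
def InGΛ (Λ : E →L[ℂ] E) (h : (E →L[ℂ] E)ˣ) : Prop :=
  (h : E →L[ℂ] E) * Λ = Λ * (h : E →L[ℂ] E)

/-- Membership in `K_Λ = {g ∈ K : g Λ g⁻¹ = Λ}`. -/
def InKΛ (Λ : E →L[ℂ] E) (h : (E →L[ℂ] E)ˣ) : Prop :=
  (h : E →L[ℂ] E) ∈ unitary (E →L[ℂ] E) ∧ InGΛ Λ h

/-- A (continuous, finite-dimensional) complex representation `ρ` of `G = GL(E)` on a Hermitian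
vector space `V`, mapping unitary elements to unitary elements, together with a self-adjoint
operator `Λ_V` on `V` compatible with `Λ` via `ρ(e^{tΛ}) = e^{tΛ_V}`. -/
structure Rep (Λ : E →L[ℂ] E) (V : Type*) [NormedAddCommGroup V] [InnerProductSpace ℂ V]
    [FiniteDimensional ℂ V] where
  ρ : (E →L[ℂ] E)ˣ →* (V →L[ℂ] V)ˣ
  continuous_ρ : Continuous fun u : (E →L[ℂ] E)ˣ => ((ρ u : (V →L[ℂ] V)ˣ) : V →L[ℂ] V)
  unitary_ρ : ∀ u : (E →L[ℂ] E)ˣ, (u : E →L[ℂ] E) ∈ unitary (E →L[ℂ] E) →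
    ((ρ u : (V →L[ℂ] V)ˣ) : V →L[ℂ] V) ∈ unitary (V →L[ℂ] V)
  ΛV : V →L[ℂ] V
  selfAdjoint_ΛV : IsSelfAdjoint ΛV
  exp_eq : ∀ t : ℝ, ((ρ (expUnit ((t : ℂ) • Λ)) : (V →L[ℂ] V)ˣ) : V →L[ℂ] V)
      = exp ((t : ℂ) • ΛV)

variable {Λ : E →L[ℂ] E}

theorem unit_apply_ne_zero (u : (V →L[ℂ] V)ˣ) {v : V} (hv : v ≠ 0) :
    (u : V →L[ℂ] V) v ≠ 0 := by
  intro h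
  apply hv
  have h2 : (((u⁻¹ : (V →L[ℂ] V)ˣ) : V →L[ℂ] V) * (u : V →L[ℂ] V)) v = 0 := by
    rw [ContinuousLinearMap.mul_apply, h, map_zero]
  rwa [Units.inv_mul, ContinuousLinearMap.one_apply] at h2

theorem unit_apply_injective (u : (V →L[ℂ] V)ˣ) :
    Function.Injective ((u : V →L[ℂ] V) : V → V) := by
  intro a b hab
  have h2 := congrArg (fun x => ((u⁻¹ : (V →L[ℂ] V)ˣ) : V →L[ℂ] V) x) hab
  simpa [← ContinuousLinearMap.mul_apply, Units.inv_mul] using h2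

/-- `f_i(v) = log ‖ρ(A_i) v‖`. -/
def fseq (R : Rep Λ V) (A : ℕ → (E →L[ℂ] E)ˣ) (v : V) (i : ℕ) : ℝ :=
  Real.log ‖(R.ρ (A i) : V →L[ℂ] V) v‖

/-- The quotient topology on the projectivization of a topological vector space. -/
instance : TopologicalSpace (ℙ ℂ V) := instTopologicalSpaceQuotient

/-- The natural action of `GL(E)` on `ℙ(V)` through the representation `R`. -/
def pact (R : Rep Λ V) (u : (E →L[ℂ] E)ˣ) : ℙ ℂ V → ℙ ℂ V :=
  Projectivization.map (((R.ρ u : (V →L[ℂ] V)ˣ) : V →L[ℂ] V) : V →ₗ[ℂ] V)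
    (unit_apply_injective _)

/-- The limit set `Lim(v) ⊆ ℙ(V)`: the union of the `ρ(K_Λ)`-orbits of all subsequential limits
of `[ρ(g_i⁻¹ A_i) v]`. -/
def LimSet (R : Rep Λ V) (A g : ℕ → (E →L[ℂ] E)ˣ) {v : V} (hv : v ≠ 0) :
    Set (ℙ ℂ V) :=
  {y | ∃ (w : V) (hw : w ≠ 0) (k : (E →L[ℂ] E)ˣ), InKΛ Λ k ∧
    y = Projectivization.mk ℂ ((R.ρ k : V →L[ℂ] V) w) (unit_apply_ne_zero _ hw) ∧
    ∃ φ : ℕ → ℕ, StrictMono φ ∧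
      Tendsto (fun j => Projectivization.mk ℂ
          ((R.ρ ((g (φ j))⁻¹ * A (φ j)) : V →L[ℂ] V) v) (unit_apply_ne_zero _ hv))
        atTop (𝓝 (Projectivization.mk ℂ w hw))}

/-- The eigenspace `U` of `Λ` with (real) eigenvalue `c`. -/
def eigU (Λ : E →L[ℂ] E) (c : ℝ) : Submodule ℂ E :=
  Module.End.eigenspace (Λ : E →ₗ[ℂ] E) (c : ℂ)

/-- The weight `d(v) = lim_i i⁻¹ log ‖A_i v‖` for the standard representation of `GL(E)` on `E`
(a junk value if the limit does not exist). -/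
def dstd (A : ℕ → (E →L[ℂ] E)ˣ) (v : E) : ℝ :=
  limUnder atTop fun i : ℕ => Real.log ‖(A i : E →L[ℂ] E) v‖ / i

/-- `p_s = Σ_{k ≤ s} n_k` where `n_k = dim U_k`. -/
def psum (Λ : E →L[ℂ] E) {r : ℕ} (lam : Fin r → ℝ) (s : Fin r) : ℕ :=
  ∑ k ∈ Finset.univ.filter (fun k => k ≤ s), Module.finrank ℂ (eigU Λ (lam k))

/-- `q_s = Σ_{k ≥ s} n_k` where `n_k = dim U_k`. -/
def qsum (Λ : E →L[ℂ] E) {r : ℕ} (lam : Fin r → ℝ) (s : Fin r) : ℕ :=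
  ∑ k ∈ Finset.univ.filter (fun k => s ≤ k), Module.finrank ℂ (eigU Λ (lam k))

/-- A model for the `p`-th exterior power of `E`, with its induced Hermitian metric
(determined by `⟨x₁∧⋯∧x_p, y₁∧⋯∧y_p⟩ = det(⟨x_i, y_j⟩)`), the induced representation of `GL(E)`,
and the induced self-adjoint operator (the derivation extension of `Λ`, pinned down by
`Rep.exp_eq` and equivariance of `wedge`). -/
structure ExtPower (Λ : E →L[ℂ] E) (p : ℕ) where
  P : Type
  [normed : NormedAddCommGroup P]
  [ips : InnerProductSpace ℂ P]
  [fd : FiniteDimensional ℂ P]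
  R : Rep Λ P
  wedge : E [⋀^Fin p]→ₗ[ℂ] P
  wedge_map : ∀ (u : (E →L[ℂ] E)ˣ) (x : Fin p → E),
    ((R.ρ u : (P →L[ℂ] P)ˣ) : P →L[ℂ] P) (wedge x) = wedge fun j => (u : E →L[ℂ] E) (x j)
  wedge_inner : ∀ x y : Fin p → E,
    (inner ℂ (wedge x) (wedge y) : ℂ) = (Matrix.of fun i j : Fin p => (inner ℂ (x i) (y j) : ℂ)).det
  wedge_span : Submodule.span ℂ (Set.range wedge) = ⊤

attribute [instance] ExtPower.normed ExtPower.ips ExtPower.fd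

/-- A bundle of the choices made in Section 2 of the paper: a gauge sequence `g` as in (*)',
the filtration `V_s` (with `V_{r+1} = 0`), complements `W_s` with `V_s = W_s ⊕ V_{s+1}` and
`Lim(W_s) = {[⋀^{n_s} U_s]}`, and identifications `C_i → Id` carrying `g_i⁻¹ A_i · W_s`
onto `U_s`. -/
structure Choices (A : ℕ → (E →L[ℂ] E)ˣ) (Λ : E →L[ℂ] E) (r : ℕ) (lam : Fin r → ℝ)
    (EP : ∀ p : ℕ, ExtPower Λ p) where
  g : ℕ → (E →L[ℂ] E)ˣ
  hg : CondStar' A Λ g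
  Vsub : Fin (r + 1) → Submodule ℂ E
  hVsub : ∀ s : Fin r, (Vsub s.castSucc : Set E) = {v : E | v = 0 ∨ dstd A v ≤ lam s}
  hVlast : Vsub (Fin.last r) = ⊥
  W : Fin r → Submodule ℂ E
  hW_sup : ∀ s : Fin r, W s ⊔ Vsub s.succ = Vsub s.castSucc
  hW_inf : ∀ s : Fin r, W s ⊓ Vsub s.succ = ⊥
  hW_lim : ∀ s : Fin r, ∀ b : Fin (Module.finrank ℂ (eigU Λ (lam s))) → E,
    LinearIndependent ℂ b → Submodule.span ℂ (Set.range b) = W s →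
    ∀ c : Fin (Module.finrank ℂ (eigU Λ (lam s))) → E,
    LinearIndependent ℂ c → Submodule.span ℂ (Set.range c) = eigU Λ (lam s) →
    ∃ (hb : (EP (Module.finrank ℂ (eigU Λ (lam s)))).wedge b ≠ 0)
      (hc : (EP (Module.finrank ℂ (eigU Λ (lam s)))).wedge c ≠ 0),
      LimSet (EP (Module.finrank ℂ (eigU Λ (lam s)))).R A g hb
        = {Projectivization.mk ℂ ((EP (Module.finrank ℂ (eigU Λ (lam s)))).wedge c) hc}
  C : ℕ → (E →L[ℂ] E)ˣ
  hC_lim : Tendsto (fun i => (C i : E →L[ℂ] E)) atTop (𝓝 1)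
  hC_map : ∀ (s : Fin r) (i : ℕ),
    Submodule.map ((((C i * (g i)⁻¹ * A i : (E →L[ℂ] E)ˣ) : E →L[ℂ] E) : E →ₗ[ℂ] E)) (W s)
      = eigU Λ (lam s)

/-- A model for the symmetric algebra `Sym(E*) = ⊕_k Sym^k(E*)` on the dual of `E`:
each graded piece is a Hermitian space carrying a compatible representation of `GL(E)`
(induced by the dual of the standard representation), `gen` identifies the degree-one piece
with `E*` equivariantly, and the product is bilinear, equivariant, has no zero divisors, and
together with the generators spans each graded piece. -/
structure SymModel (Λ : E →L[ℂ] E) where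
  P : ℕ → Type
  [normed : ∀ k, NormedAddCommGroup (P k)]
  [ips : ∀ k, InnerProductSpace ℂ (P k)]
  [fd : ∀ k, FiniteDimensional ℂ (P k)]
  R : ∀ k, Rep Λ (P k)
  mul : ∀ {k l : ℕ}, P k →ₗ[ℂ] P l →ₗ[ℂ] P (k + l)
  mul_equivariant : ∀ {k l : ℕ} (u : (E →L[ℂ] E)ˣ) (x : P k) (y : P l),
    (((R (k + l)).ρ u : (P (k + l) →L[ℂ] P (k + l))ˣ) : P (k + l) →L[ℂ] P (k + l)) (mul x y)
      = mul ((((R k).ρ u : (P k →L[ℂ] P k)ˣ) : P k →L[ℂ] P k) x)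
            ((((R l).ρ u : (P l →L[ℂ] P l)ˣ) : P l →L[ℂ] P l) y)
  mul_ne_zero : ∀ {k l : ℕ} {x : P k} {y : P l}, x ≠ 0 → y ≠ 0 → mul x y ≠ 0
  gen : (E →L[ℂ] ℂ) ≃ₗ[ℂ] P 1
  gen_equivariant : ∀ (u : (E →L[ℂ] E)ˣ) (l : E →L[ℂ] ℂ),
    (((R 1).ρ u : (P 1 →L[ℂ] P 1)ˣ) : P 1 →L[ℂ] P 1) (gen l)
      = gen (l.comp (((u⁻¹ : (E →L[ℂ] E)ˣ) : E →L[ℂ] E)))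
  span_gen_mul : ∀ k : ℕ, Submodule.span ℂ
      {z : P (k + 1) | ∃ (x : P k) (l : E →L[ℂ] ℂ), z = mul x (gen l)} = ⊤

attribute [instance] SymModel.normed SymModel.ips SymModel.fd

/-! ### Auxiliary lemmas for Lemma 2.2 -/

theorem unitary_norm_apply {u : V →L[ℂ] V} (hu : u ∈ unitary (V →L[ℂ] V)) (x : V) :
    ‖u x‖ = ‖x‖ := by
  have hstar := hu.1
  rw [ContinuousLinearMap.star_eq_adjoint] at hstar
  have h1 : ContinuousLinearMap.adjoint u (u x) = x := by
    calc ContinuousLinearMap.adjoint u (u x)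
        = (ContinuousLinearMap.adjoint u * u) x := rfl
      _ = x := by rw [hstar]; rfl
  have h3 := ContinuousLinearMap.adjoint_inner_left u x (u x)
  rw [h1] at h3
  have h4 : ‖u x‖ ^ 2 = ‖x‖ ^ 2 := by
    rw [← inner_self_eq_norm_sq (𝕜 := ℂ) (u x), ← h3, inner_self_eq_norm_sq]
  rw [← Real.sqrt_sq (norm_nonneg (u x)), h4, Real.sqrt_sq (norm_nonneg x)]

theorem inv_val_mem_unitary (u : (V →L[ℂ] V)ˣ)
    (hu : (u : V →L[ℂ] V) ∈ unitary (V →L[ℂ] V)) :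
    ((u⁻¹ : (V →L[ℂ] V)ˣ) : V →L[ℂ] V) ∈ unitary (V →L[ℂ] V) := by
  have hval : ((u⁻¹ : (V →L[ℂ] V)ˣ) : V →L[ℂ] V) = star (u : V →L[ℂ] V) := by
    calc ((u⁻¹ : (V →L[ℂ] V)ˣ) : V →L[ℂ] V) = 1 * ((u⁻¹ : (V →L[ℂ] V)ˣ) : V →L[ℂ] V) :=
          (one_mul _).symm
      _ = (star (u : V →L[ℂ] V) * (u : V →L[ℂ] V)) * ((u⁻¹ : (V →L[ℂ] V)ˣ) : V →L[ℂ] V) := by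
          rw [hu.1]
      _ = star (u : V →L[ℂ] V) * ((u : V →L[ℂ] V) * ((u⁻¹ : (V →L[ℂ] V)ˣ) : V →L[ℂ] V)) :=
          mul_assoc _ _ _
      _ = star (u : V →L[ℂ] V) := by rw [Units.mul_inv, mul_one]
  rw [hval]
  exact Unitary.star_mem hu

theorem exp_apply_eigen (T : V →L[ℂ] V) {μ : ℂ} {x : V} (h : T x = μ • x) :
    exp T x = Complex.exp μ • x := by
  have hpow : ∀ n : ℕ, (T ^ n) x = μ ^ n • x := by
    intro n
    induction n with
    | zero => simp
    | succ n ih =>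
      rw [pow_succ, ContinuousLinearMap.mul_apply, h, map_smul, ih, smul_smul]
      congr 1
      ring
  have hsum := (ContinuousLinearMap.apply ℂ V x).map_tsum (expSeries_summable' (𝕂 := ℂ) T)
  calc exp T x = (∑' n : ℕ, (n.factorial : ℂ)⁻¹ • T ^ n) x := by rw [exp_eq_tsum ℂ]
    _ = ∑' n : ℕ, ((n.factorial : ℂ)⁻¹ • T ^ n) x := by
        simpa [ContinuousLinearMap.apply_apply] using hsum
    _ = ∑' n : ℕ, ((n.factorial : ℂ)⁻¹ * μ ^ n) • x := by
        refine tsum_congr fun n => ?_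
        rw [ContinuousLinearMap.smul_apply, hpow, smul_smul]
    _ = (∑' n : ℕ, (n.factorial : ℂ)⁻¹ * μ ^ n) • x :=
        Summable.tsum_smul_const (by simpa [smul_eq_mul] using expSeries_summable' (𝕂 := ℂ) μ) x
    _ = Complex.exp μ • x := by
        rw [Complex.exp_eq_exp_ℂ, exp_eq_tsum ℂ]
        simp [smul_eq_mul]

theorem mem_spectrum_of_eigen {T : V →L[ℂ] V} {μ : ℂ} {x : V} (hx : x ≠ 0)
    (h : T x = μ • x) : μ ∈ spectrum ℂ T := by
  rw [spectrum.mem_iff]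
  intro hunit
  obtain ⟨U, hU⟩ := hunit
  have h0 : (algebraMap ℂ (V →L[ℂ] V) μ - T) x = 0 := by
    rw [ContinuousLinearMap.sub_apply, h, Algebra.algebraMap_eq_smul_one,
      ContinuousLinearMap.smul_apply, ContinuousLinearMap.one_apply, sub_self]
  apply hx
  have hUx : (U : V →L[ℂ] V) x = 0 := by rw [hU]; exact h0
  calc x = ((U⁻¹ : (V →L[ℂ] V)ˣ) : V →L[ℂ] V) ((U : V →L[ℂ] V) x) := by
        rw [← ContinuousLinearMap.mul_apply, Units.inv_mul, ContinuousLinearMap.one_apply]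
    _ = 0 := by rw [hUx, map_zero]

/-- The set of real eigenvalues of an operator. -/
def realEigs (T : V →L[ℂ] V) : Set ℝ := {μ : ℝ | ∃ x : V, x ≠ 0 ∧ T x = (μ : ℂ) • x}

theorem realEigs_finite (T : V →L[ℂ] V) : (realEigs T).Finite := by
  have hfin : Set.Finite (Module.End.HasEigenvalue (↑T : V →ₗ[ℂ] V)) :=
    Module.End.finite_hasEigenvalue _
  refine Set.Finite.subset (hfin.preimage (Complex.ofReal_injective.injOn)) ?_
  rintro μ ⟨x, hx, hTx⟩
  exact Module.End.hasEigenvalue_of_hasEigenvector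
    ⟨Module.End.mem_eigenspace_iff.2 hTx, hx⟩

theorem realEigs_subset_spectrum (T : V →L[ℂ] V) {μ : ℝ} (hμ : μ ∈ realEigs T) :
    (μ : ℂ) ∈ spectrum ℂ T := by
  obtain ⟨x, hx, hTx⟩ := hμ
  exact mem_spectrum_of_eigen hx hTx

theorem norm_exp_sq {T : V →L[ℂ] V} (hT : IsSelfAdjoint T) (w : V) :
    ‖exp T w‖ ^ 2 = RCLike.re (inner ℂ w (exp T (exp T w)) : ℂ) := by
  have hsa : IsSelfAdjoint (exp T) := IsSelfAdjoint.exp hT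
  have h3 := ContinuousLinearMap.adjoint_inner_left (exp T) (exp T w) w
  rw [← ContinuousLinearMap.star_eq_adjoint, hsa.star_eq] at h3
  rw [← h3, inner_self_eq_norm_sq]

theorem exp_ne_zero_apply (T : V →L[ℂ] V) {w : V} (hw : w ≠ 0) : exp T w ≠ 0 :=
  unit_apply_ne_zero (expUnit T) hw

theorem key_ineq {T : V →L[ℂ] V} (hT : IsSelfAdjoint T) {w : V} (hw : ‖w‖ = 1) :
    2 * Real.log ‖exp T w‖ ≤ Real.log ‖exp T (exp T w)‖ := by
  have hw0 : w ≠ 0 := by intro h; rw [h, norm_zero] at hw; norm_num at hw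
  have ha0 : exp T w ≠ 0 := exp_ne_zero_apply T hw0
  have hapos : (0 : ℝ) < ‖exp T w‖ := norm_pos_iff.2 ha0
  have h1 := norm_exp_sq hT w
  have h2 : RCLike.re (inner ℂ w (exp T (exp T w)) : ℂ) ≤ ‖exp T (exp T w)‖ := by
    calc RCLike.re (inner ℂ w (exp T (exp T w)) : ℂ)
        ≤ ‖(inner ℂ w (exp T (exp T w)) : ℂ)‖ := RCLike.re_le_norm _
      _ ≤ ‖w‖ * ‖exp T (exp T w)‖ := norm_inner_le_norm _ _
      _ = ‖exp T (exp T w)‖ := by rw [hw, one_mul]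
  have h4 : ‖exp T w‖ ^ 2 ≤ ‖exp T (exp T w)‖ := h1.trans_le h2
  calc 2 * Real.log ‖exp T w‖ = Real.log (‖exp T w‖ ^ 2) := by
        rw [Real.log_pow]; norm_num
    _ ≤ Real.log ‖exp T (exp T w)‖ := Real.log_le_log (by positivity) h4

theorem key_eq {T : V →L[ℂ] V} (hT : IsSelfAdjoint T) {w : V} (hw : ‖w‖ = 1)
    (heq : 2 * Real.log ‖exp T w‖ = Real.log ‖exp T (exp T w)‖) :
    ∃ μ : ℝ, μ ∈ realEigs T ∧ Real.log ‖exp T w‖ = μ := by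
  classical
  have hw0 : w ≠ 0 := by intro h; rw [h, norm_zero] at hw; norm_num at hw
  have ha0 : exp T w ≠ 0 := exp_ne_zero_apply T hw0
  have hz0 : exp T (exp T w) ≠ 0 := exp_ne_zero_apply T ha0
  have hapos : (0 : ℝ) < ‖exp T w‖ := norm_pos_iff.2 ha0
  have hzpos : (0 : ℝ) < ‖exp T (exp T w)‖ := norm_pos_iff.2 hz0
  have hsq : ‖exp T w‖ ^ 2 = ‖exp T (exp T w)‖ := by
    have hc := congrArg Real.exp heq
    rwa [two_mul, Real.exp_add, Real.exp_log hapos, Real.exp_log hzpos, ← sq] at hc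
  have h1 : ‖exp T w‖ ^ 2 = RCLike.re (inner ℂ w (exp T (exp T w)) : ℂ) :=
    norm_exp_sq hT w
  have hre : RCLike.re (inner ℂ w (exp T (exp T w)) : ℂ)
      = ‖w‖ * ‖exp T (exp T w)‖ := by
    rw [← h1, hsq, hw, one_mul]
  have hn : ‖(inner ℂ w (exp T (exp T w)) : ℂ)‖ = ‖w‖ * ‖exp T (exp T w)‖ :=
    le_antisymm (norm_inner_le_norm _ _) (hre ▸ RCLike.re_le_norm _)
  obtain ⟨r, hr0, hrz⟩ := (norm_inner_eq_norm_iff hw0 hz0).mp hn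
  have hsym : (↑T : V →ₗ[ℂ] V).IsSymmetric :=
    ContinuousLinearMap.isSelfAdjoint_iff_isSymmetric.mp hT
  set b := hsym.eigenvectorBasis (rfl : Module.finrank ℂ V = Module.finrank ℂ V) with hbdef
  set vals := hsym.eigenvalues (rfl : Module.finrank ℂ V = Module.finrank ℂ V) with hvalsdef
  have heig : ∀ i, T (b i) = ((vals i : ℝ) : ℂ) • b i := fun i =>
    hsym.apply_eigenvectorBasis rfl i
  set c : Fin (Module.finrank ℂ V) → ℂ := fun i => b.repr w i with hcdef
  have hwsum : ∑ i, c i • b i = w := b.sum_repr w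
  have hexp1 : exp T w = ∑ i, (Complex.exp (vals i) * c i) • b i := by
    conv_lhs => rw [← hwsum]
    rw [map_sum]
    refine Finset.sum_congr rfl fun i _ => ?_
    rw [map_smul, exp_apply_eigen T (heig i), smul_smul, mul_comm]
  have hz_expand : exp T (exp T w)
      = ∑ i, (Complex.exp (vals i) * Complex.exp (vals i) * c i) • b i := by
    rw [hexp1, map_sum]
    refine Finset.sum_congr rfl fun i _ => ?_
    rw [map_smul, exp_apply_eigen T (heig i), smul_smul]
    congr 1
    ring
  have hz_expand2 : exp T (exp T w) = ∑ i, (r * c i) • b i := by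
    rw [hrz]
    conv_lhs => rw [← hwsum]
    rw [Finset.smul_sum]
    exact Finset.sum_congr rfl fun i _ => smul_smul _ _ _
  have hcoord : ∀ i, Complex.exp (vals i) * Complex.exp (vals i) * c i = r * c i := by
    intro i
    have e1 : (inner ℂ (b i) (exp T (exp T w)) : ℂ)
        = Complex.exp (vals i) * Complex.exp (vals i) * c i := by
      rw [hz_expand]
      exact b.orthonormal.inner_right_fintype _ i
    have e2 : (inner ℂ (b i) (exp T (exp T w)) : ℂ) = r * c i := by
      rw [hz_expand2]
      exact b.orthonormal.inner_right_fintype _ i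
    rw [← e1, e2]
  obtain ⟨i, hci⟩ : ∃ i, c i ≠ 0 := by
    by_contra hc
    push_neg at hc
    apply hw0
    rw [← hwsum]
    simp [hc]
  have hrval : r = Complex.exp (vals i) * Complex.exp (vals i) :=
    (mul_right_cancel₀ hci (hcoord i)).symm
  have hinner : (inner ℂ w (exp T (exp T w)) : ℂ) = r := by
    rw [hrz, inner_smul_right, inner_self_eq_norm_sq_to_K, hw]
    norm_num
  have hna : ‖exp T w‖ ^ 2 = Real.exp (vals i) ^ 2 := by
    have hre2 : RCLike.re (inner ℂ w (exp T (exp T w)) : ℂ) = Real.exp (vals i) ^ 2 := by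
      rw [hinner, hrval, ← Complex.ofReal_exp, ← Complex.ofReal_mul, ← sq]
      simp [← Complex.ofReal_exp, ← Complex.ofReal_pow]
    rw [h1, hre2]
  have hnaeq : ‖exp T w‖ = Real.exp (vals i) := by
    rw [← Real.sqrt_sq hapos.le, hna, Real.sqrt_sq (Real.exp_pos _).le]
  have hbne : b i ≠ 0 := by
    have hb1 : ‖b i‖ = 1 := b.orthonormal.1 i
    intro h
    rw [h, norm_zero] at hb1
    norm_num at hb1
  exact ⟨vals i, ⟨b i, hbne, heig i⟩, by rw [hnaeq, Real.log_exp]⟩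

theorem tendsto_clm_apply {T : ℕ → V →L[ℂ] V} {S : V →L[ℂ] V} {x : ℕ → V} {y : V}
    (hT : Tendsto T atTop (𝓝 S)) (hx : Tendsto x atTop (𝓝 y)) :
    Tendsto (fun n => T n (x n)) atTop (𝓝 (S y)) := by
  have hcont : Continuous fun p : (V →L[ℂ] V) × V => p.1 p.2 :=
    isBoundedBilinearMap_apply.continuous
  exact (hcont.tendsto (S, y)).comp (hT.prodMk_nhds hx)

variable {Λ : E →L[ℂ] E} in
theorem ρB_mul (R : Rep Λ V) (A : ℕ → (E →L[ℂ] E)ˣ) (n : ℕ) (v : V) :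
    (R.ρ (Bseq A (n + 1)) : V →L[ℂ] V) ((R.ρ (A n) : V →L[ℂ] V) v)
      = (R.ρ (A (n + 1)) : V →L[ℂ] V) v := by
  have hB : Bseq A (n + 1) * A n = A (n + 1) := by
    rw [Bseq]
    simp only [Nat.add_sub_cancel]
    exact inv_mul_cancel_right _ _
  rw [← ContinuousLinearMap.mul_apply, ← Units.val_mul, ← map_mul, hB]

theorem lognorm_smul_inv {x : V} (hx : x ≠ 0) {y : V} (hy : y ≠ 0) :
    Real.log ‖((‖x‖ : ℂ))⁻¹ • y‖ = Real.log ‖y‖ - Real.log ‖x‖ := by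
  have hnx : ‖x‖ ≠ 0 := norm_ne_zero_iff.2 hx
  have hny : ‖y‖ ≠ 0 := norm_ne_zero_iff.2 hy
  rw [norm_smul, norm_inv]
  have hco : ‖((‖x‖ : ℂ))‖ = ‖x‖ := by
    rw [Complex.norm_real, Real.norm_of_nonneg (norm_nonneg _)]
  rw [hco, Real.log_mul (inv_ne_zero hnx) hny, Real.log_inv]
  ring

variable {Λ : E →L[ℂ] E} in
theorem fdiff_eq (R : Rep Λ V) (A : ℕ → (E →L[ℂ] E)ˣ) {v : V} (hv : v ≠ 0) (n : ℕ) :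
    fseq R A v (n + 1) - fseq R A v n =
      Real.log ‖(R.ρ (Bseq A (n + 1)) : V →L[ℂ] V)
        (((‖(R.ρ (A n) : V →L[ℂ] V) v‖ : ℂ))⁻¹ • (R.ρ (A n) : V →L[ℂ] V) v)‖ := by
  have hxn : (R.ρ (A n) : V →L[ℂ] V) v ≠ 0 := unit_apply_ne_zero _ hv
  have hxn1 : (R.ρ (A (n + 1)) : V →L[ℂ] V) v ≠ 0 := unit_apply_ne_zero _ hv
  rw [map_smul, ρB_mul R A n v, lognorm_smul_inv hxn hxn1]
  rfl

variable {Λ : E →L[ℂ] E} in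
theorem fdiff2_eq (R : Rep Λ V) (A : ℕ → (E →L[ℂ] E)ˣ) {v : V} (hv : v ≠ 0) (n : ℕ) :
    fseq R A v (n + 2) - fseq R A v (n + 1) =
      Real.log ‖(R.ρ (Bseq A (n + 2)) : V →L[ℂ] V) ((R.ρ (Bseq A (n + 1)) : V →L[ℂ] V)
          (((‖(R.ρ (A n) : V →L[ℂ] V) v‖ : ℂ))⁻¹ • (R.ρ (A n) : V →L[ℂ] V) v))‖
      - Real.log ‖(R.ρ (Bseq A (n + 1)) : V →L[ℂ] V)
          (((‖(R.ρ (A n) : V →L[ℂ] V) v‖ : ℂ))⁻¹ • (R.ρ (A n) : V →L[ℂ] V) v)‖ := by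
  have hxn : (R.ρ (A n) : V →L[ℂ] V) v ≠ 0 := unit_apply_ne_zero _ hv
  have hxn1 : (R.ρ (A (n + 1)) : V →L[ℂ] V) v ≠ 0 := unit_apply_ne_zero _ hv
  have hxn2 : (R.ρ (A (n + 2)) : V →L[ℂ] V) v ≠ 0 := unit_apply_ne_zero _ hv
  have h2 : (R.ρ (Bseq A (n + 2)) : V →L[ℂ] V) ((R.ρ (Bseq A (n + 1)) : V →L[ℂ] V)
      (((‖(R.ρ (A n) : V →L[ℂ] V) v‖ : ℂ))⁻¹ • (R.ρ (A n) : V →L[ℂ] V) v))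
      = ((‖(R.ρ (A n) : V →L[ℂ] V) v‖ : ℂ))⁻¹ • (R.ρ (A (n + 2)) : V →L[ℂ] V) v := by
    rw [map_smul, ρB_mul R A n v, map_smul, ρB_mul R A (n + 1) v]
  rw [h2, map_smul, ρB_mul R A n v, lognorm_smul_inv hxn hxn2, lognorm_smul_inv hxn hxn1]
  have : fseq R A v (n + 2) - fseq R A v (n + 1)
      = Real.log ‖(R.ρ (A (n + 2)) : V →L[ℂ] V) v‖
        - Real.log ‖(R.ρ (A (n + 1)) : V →L[ℂ] V) v‖ := rfl
  rw [this]
  ring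

variable {Λ : E →L[ℂ] E} in
/-- The key extraction lemma: along any subsequence, after a further extraction, both
`f_{i+1}-f_i` and `f_{i+2}-f_{i+1}` converge to values computed from a unit vector `w`. -/
theorem extract (A : ℕ → (E →L[ℂ] E)ˣ) (hstar : CondStar A Λ) (R : Rep Λ V)
    {v : V} (hv : v ≠ 0) (φ : ℕ → ℕ) (hφ : StrictMono φ) :
    ∃ ψ : ℕ → ℕ, StrictMono ψ ∧ ∃ w : V, ‖w‖ = 1 ∧
      Tendsto (fun j => fseq R A v (φ (ψ j) + 1) - fseq R A v (φ (ψ j))) atTop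
        (𝓝 (Real.log ‖exp R.ΛV w‖)) ∧
      Tendsto (fun j => fseq R A v (φ (ψ j) + 2) - fseq R A v (φ (ψ j) + 1)) atTop
        (𝓝 (Real.log ‖exp R.ΛV (exp R.ΛV w)‖ - Real.log ‖exp R.ΛV w‖)) := by
  obtain ⟨ψ₀, hψ₀, g, hgu, hB1, hB2⟩ := hstar φ hφ
  have hx : ∀ n, (R.ρ (A n) : V →L[ℂ] V) v ≠ 0 := fun n => unit_apply_ne_zero _ hv
  set u : ℕ → V := fun n =>
    ((‖(R.ρ (A n) : V →L[ℂ] V) v‖ : ℂ))⁻¹ • (R.ρ (A n) : V →L[ℂ] V) v with hudef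
  have hu1 : ∀ n, ‖u n‖ = 1 := fun n => norm_smul_inv_norm (hx n)
  obtain ⟨ulim, hulims, ψ₁, hψ₁, htu⟩ :=
    (isCompact_sphere (0 : V) 1).tendsto_subseq (x := fun j => u (φ (ψ₀ j)))
      (fun j => mem_sphere_zero_iff_norm.2 (hu1 _))
  have hulim : ‖ulim‖ = 1 := mem_sphere_zero_iff_norm.1 hulims
  have hulim0 : ulim ≠ 0 := by intro h; rw [h, norm_zero] at hulim; norm_num at hulim
  set M : (E →L[ℂ] E)ˣ := g * expUnit Λ * g⁻¹ with hM
  have hρ1 : Tendsto (fun j => (R.ρ (Bseq A (φ (ψ₀ j) + 1)) : V →L[ℂ] V)) atTop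
      (𝓝 (R.ρ M : V →L[ℂ] V)) := by
    have h1 : Tendsto (fun j => Bseq A (φ (ψ₀ j) + 1)) atTop (𝓝 M) :=
      (Units.isOpenEmbedding_val.isEmbedding.tendsto_nhds_iff).2 hB1
    exact (R.continuous_ρ.tendsto M).comp h1
  have hρ2 : Tendsto (fun j => (R.ρ (Bseq A (φ (ψ₀ j) + 2)) : V →L[ℂ] V)) atTop
      (𝓝 (R.ρ M : V →L[ℂ] V)) := by
    have h1 : Tendsto (fun j => Bseq A (φ (ψ₀ j) + 2)) atTop (𝓝 M) :=
      (Units.isOpenEmbedding_val.isEmbedding.tendsto_nhds_iff).2 hB2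
    exact (R.continuous_ρ.tendsto M).comp h1
  set w : V := (((R.ρ g)⁻¹ : (V →L[ℂ] V)ˣ) : V →L[ℂ] V) ulim with hwdef
  have hval : (R.ρ (expUnit Λ) : V →L[ℂ] V) = exp R.ΛV := by
    have h := R.exp_eq 1
    simpa using h
  have hρM : R.ρ M = R.ρ g * R.ρ (expUnit Λ) * (R.ρ g)⁻¹ := by
    rw [hM, map_mul, map_mul, map_inv]
  have hMval : ∀ t : V, (R.ρ M : V →L[ℂ] V) t
      = (R.ρ g : V →L[ℂ] V) (exp R.ΛV ((((R.ρ g)⁻¹ : (V →L[ℂ] V)ˣ) : V →L[ℂ] V) t)) := by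
    intro t
    rw [hρM]
    simp only [Units.val_mul, ContinuousLinearMap.mul_apply, hval]
  have hnormg : ∀ t : V, ‖(R.ρ g : V →L[ℂ] V) t‖ = ‖t‖ :=
    unitary_norm_apply (R.unitary_ρ g hgu)
  have hnormginv : ∀ t : V, ‖(((R.ρ g)⁻¹ : (V →L[ℂ] V)ˣ) : V →L[ℂ] V) t‖ = ‖t‖ :=
    unitary_norm_apply (inv_val_mem_unitary (R.ρ g) (R.unitary_ρ g hgu))
  have hw1 : ‖w‖ = 1 := by rw [hwdef, hnormginv, hulim]
  have hMu : ‖(R.ρ M : V →L[ℂ] V) ulim‖ = ‖exp R.ΛV w‖ := by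
    rw [hMval, hnormg, hwdef]
  have hinvg : ∀ t : V, (((R.ρ g)⁻¹ : (V →L[ℂ] V)ˣ) : V →L[ℂ] V) ((R.ρ g : V →L[ℂ] V) t) = t := by
    intro t
    rw [← ContinuousLinearMap.mul_apply, ← Units.val_mul, inv_mul_cancel]
    rfl
  have hMMu : ‖(R.ρ M : V →L[ℂ] V) ((R.ρ M : V →L[ℂ] V) ulim)‖
      = ‖exp R.ΛV (exp R.ΛV w)‖ := by
    rw [hMval ((R.ρ M : V →L[ℂ] V) ulim), hnormg, hMval ulim, hinvg, hwdef]
  have hMu0 : (R.ρ M : V →L[ℂ] V) ulim ≠ 0 := unit_apply_ne_zero _ hulim0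
  have hMMu0 : (R.ρ M : V →L[ℂ] V) ((R.ρ M : V →L[ℂ] V) ulim) ≠ 0 :=
    unit_apply_ne_zero _ hMu0
  have hρ1' : Tendsto (fun j => (R.ρ (Bseq A (φ (ψ₀ (ψ₁ j)) + 1)) : V →L[ℂ] V)) atTop
      (𝓝 (R.ρ M : V →L[ℂ] V)) := hρ1.comp hψ₁.tendsto_atTop
  have hρ2' : Tendsto (fun j => (R.ρ (Bseq A (φ (ψ₀ (ψ₁ j)) + 2)) : V →L[ℂ] V)) atTop
      (𝓝 (R.ρ M : V →L[ℂ] V)) := hρ2.comp hψ₁.tendsto_atTop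
  have hev1 : Tendsto (fun j => (R.ρ (Bseq A (φ (ψ₀ (ψ₁ j)) + 1)) : V →L[ℂ] V)
      (u (φ (ψ₀ (ψ₁ j))))) atTop (𝓝 ((R.ρ M : V →L[ℂ] V) ulim)) :=
    tendsto_clm_apply hρ1' htu
  have hev2 : Tendsto (fun j => (R.ρ (Bseq A (φ (ψ₀ (ψ₁ j)) + 2)) : V →L[ℂ] V)
      ((R.ρ (Bseq A (φ (ψ₀ (ψ₁ j)) + 1)) : V →L[ℂ] V) (u (φ (ψ₀ (ψ₁ j)))))) atTop
      (𝓝 ((R.ρ M : V →L[ℂ] V) ((R.ρ M : V →L[ℂ] V) ulim))) :=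
    tendsto_clm_apply hρ2' hev1
  have hlog1 : Tendsto (fun j => Real.log ‖(R.ρ (Bseq A (φ (ψ₀ (ψ₁ j)) + 1)) : V →L[ℂ] V)
      (u (φ (ψ₀ (ψ₁ j))))‖) atTop (𝓝 (Real.log ‖(R.ρ M : V →L[ℂ] V) ulim‖)) :=
    ((Real.continuousAt_log (norm_ne_zero_iff.2 hMu0)).tendsto).comp
      ((continuous_norm.tendsto _).comp hev1)
  have hlog2 : Tendsto (fun j => Real.log ‖(R.ρ (Bseq A (φ (ψ₀ (ψ₁ j)) + 2)) : V →L[ℂ] V)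
      ((R.ρ (Bseq A (φ (ψ₀ (ψ₁ j)) + 1)) : V →L[ℂ] V) (u (φ (ψ₀ (ψ₁ j)))))‖) atTop
      (𝓝 (Real.log ‖(R.ρ M : V →L[ℂ] V) ((R.ρ M : V →L[ℂ] V) ulim)‖)) :=
    ((Real.continuousAt_log (norm_ne_zero_iff.2 hMMu0)).tendsto).comp
      ((continuous_norm.tendsto _).comp hev2)
  refine ⟨ψ₀ ∘ ψ₁, hψ₀.comp hψ₁, w, hw1, ?_, ?_⟩
  · have h := hlog1
    rw [hMu] at h
    exact h.congr fun j => (fdiff_eq R A hv (φ (ψ₀ (ψ₁ j)))).symm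
  · have h := hlog2.sub hlog1
    rw [hMu, hMMu] at h
    exact h.congr fun j => (fdiff2_eq R A hv (φ (ψ₀ (ψ₁ j)))).symm

set_option maxHeartbeats 2000000 in
/-- Lemma 2.2. Assume condition (*). For every `v ≠ 0` the limits
`lim_i (f_{i+1}(v) - f_i(v))` and `lim_i i⁻¹ f_i(v)` both exist, they are equal, and their
common value `d(v)` lies in the spectrum `S(V)` of `Λ_V`. -/
theorem dweight_exists (Λ : E →L[ℂ] E) (hΛ : IsSelfAdjoint Λ)
    (A : ℕ → (E →L[ℂ] E)ˣ) (hA0 : A 0 = 1) (hstar : CondStar A Λ)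
    (R : Rep Λ V) (v : V) (hv : v ≠ 0) :
    ∃ d : ℝ, (d : ℂ) ∈ spectrum ℂ R.ΛV ∧
      Tendsto (fun i : ℕ => fseq R A v (i + 1) - fseq R A v i) atTop (𝓝 d) ∧
      Tendsto (fun i : ℕ => fseq R A v i / i) atTop (𝓝 d) := by
  classical
  set h : ℕ → ℝ := fun i => fseq R A v (i + 1) - fseq R A v i with hhdef
  set T := R.ΛV with hTdef
  have hTsa : IsSelfAdjoint T := R.selfAdjoint_ΛV
  -- boundedness of the difference sequence
  have hbdd : ∃ C : ℝ, ∀ᶠ i in atTop, |h i| ≤ C := by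
    by_contra hC
    push_neg at hC
    have hfreq : ∀ n : ℕ, ∃ᶠ i in atTop, (n : ℝ) < |h i| := by
      intro n
      have h1 := hC n
      exact h1
    obtain ⟨φ, hφ, hP⟩ := Filter.extraction_forall_of_frequently hfreq
    obtain ⟨ψ, hψ, w, hw1, ht1, _⟩ := extract A hstar R hv φ hφ
    set L0 := Real.log ‖exp T w‖ with hL0
    have habs : Tendsto (fun j => |h (φ (ψ j))|) atTop (𝓝 |L0|) := ht1.abs
    have hev : ∀ᶠ j in atTop, |h (φ (ψ j))| < |L0| + 1 :=
      habs.eventually_lt_const (lt_add_one |L0|)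
    have hev2 : ∀ᶠ j : ℕ in atTop, (|L0| + 1 : ℝ) ≤ (j : ℝ) :=
      (tendsto_natCast_atTop_atTop (R := ℝ)).eventually_ge_atTop (|L0| + 1)
    obtain ⟨j, hj1, hj2⟩ := (hev.and hev2).exists
    have hj3 : (j : ℝ) ≤ (ψ j : ℝ) := Nat.cast_le.2 hψ.le_apply
    have hj4 : (ψ j : ℝ) < |h (φ (ψ j))| := hP (ψ j)
    linarith
  obtain ⟨C, hC⟩ := hbdd
  have hba : IsBoundedUnder (· ≤ ·) atTop h :=
    isBoundedUnder_of_eventually_le (hC.mono fun i hi => (abs_le.1 hi).2)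
  have hbb : IsBoundedUnder (· ≥ ·) atTop h :=
    isBoundedUnder_of_eventually_ge (hC.mono fun i hi => (abs_le.1 hi).1)
  have hcoa : IsCoboundedUnder (· ≤ ·) atTop h := hbb.isCoboundedUnder_le
  have hcob : IsCoboundedUnder (· ≥ ·) atTop h := hba.isCoboundedUnder_ge
  set L := limsup h atTop with hLdef
  set l := liminf h atTop with hldef
  -- the limsup is attained with the equality case of the key inequality
  have hLmem : ∃ w : V, ‖w‖ = 1 ∧ Real.log ‖exp T w‖ = L ∧
      2 * Real.log ‖exp T w‖ = Real.log ‖exp T (exp T w)‖ := by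
    have hfreq : ∀ n : ℕ, ∃ᶠ k in atTop,
        L - 1/((n : ℝ)+1) < h k ∧ h k < L + 1/((n : ℝ)+1) := by
      intro n
      have h1 : ∃ᶠ k in atTop, L - 1/((n : ℝ)+1) < h k :=
        frequently_lt_of_lt_limsup hcoa (sub_lt_self L (by positivity))
      have h2 : ∀ᶠ k in atTop, h k < L + 1/((n : ℝ)+1) :=
        eventually_lt_of_limsup_lt (lt_add_of_pos_right L (by positivity)) hba
      exact h1.and_eventually h2
    obtain ⟨φ, hφ, hP⟩ := Filter.extraction_forall_of_frequently hfreq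
    have htφ : Tendsto (fun n => h (φ n)) atTop (𝓝 L) := by
      have hup : Tendsto (fun n : ℕ => L + 1/((n : ℝ)+1)) atTop (𝓝 (L + 0)) :=
        tendsto_const_nhds.add tendsto_one_div_add_atTop_nhds_zero_nat
      have hdown : Tendsto (fun n : ℕ => L - 1/((n : ℝ)+1)) atTop (𝓝 (L - 0)) :=
        tendsto_const_nhds.sub tendsto_one_div_add_atTop_nhds_zero_nat
      rw [add_zero] at hup
      rw [sub_zero] at hdown
      exact tendsto_of_tendsto_of_tendsto_of_le_of_le hdown hup
        (fun n => (hP n).1.le) (fun n => (hP n).2.le)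
    obtain ⟨ψ, hψ, w, hw1, ht1, ht2⟩ := extract A hstar R hv φ hφ
    have ha : Real.log ‖exp T w‖ = L :=
      tendsto_nhds_unique ht1 (htφ.comp hψ.tendsto_atTop)
    have hble : Real.log ‖exp T (exp T w)‖ - Real.log ‖exp T w‖ ≤ L := by
      refine le_of_forall_pos_le_add fun ε hε => ?_
      have hev : ∀ᶠ k in atTop, h k < L + ε :=
        eventually_lt_of_limsup_lt (lt_add_of_pos_right L hε) hba
      have hat : Tendsto (fun j => φ (ψ j) + 1) atTop atTop :=
        (tendsto_add_atTop_nat 1).comp ((hφ.comp hψ).tendsto_atTop)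
      exact le_of_tendsto ht2 ((hat.eventually hev).mono fun j hj => hj.le)
    have hkey := key_ineq hTsa hw1
    exact ⟨w, hw1, ha, le_antisymm hkey (by linarith)⟩
  obtain ⟨w0, hw01, hw0L, hw0eq⟩ := hLmem
  obtain ⟨μ0, hμ0mem, hμ0val⟩ := key_eq hTsa hw01 hw0eq
  have hLeig : L ∈ realEigs T := by
    have : L = μ0 := by rw [← hw0L, hμ0val]
    rw [this]
    exact hμ0mem
  have hLspec : (L : ℂ) ∈ spectrum ℂ T := realEigs_subset_spectrum T hLeig
  -- liminf = limsup
  have hlL : l = L := by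
    by_contra hne
    have hlltL : l < L := lt_of_le_of_ne (liminf_le_limsup hba hbb) hne
    have hO : IsOpen (Set.Ioo l L \ realEigs T) :=
      isOpen_Ioo.sdiff (realEigs_finite T).isClosed
    have hne2 : (Set.Ioo l L \ realEigs T).Nonempty :=
      ((Set.Ioo_infinite hlltL).diff (realEigs_finite T)).nonempty
    obtain ⟨c, hc⟩ := hne2
    obtain ⟨ε, hε, hball⟩ := Metric.isOpen_iff.1 hO c hc
    set η := ε/2 with hηdef
    have hη0 : 0 < η := by positivity
    have hsub : Set.Icc (c-η) (c+η) ⊆ Set.Ioo l L \ realEigs T := by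
      intro x hx
      apply hball
      rw [Real.ball_eq_Ioo]
      have h1 := hx.1
      have h2 := hx.2
      constructor
      · rw [hηdef] at h1; linarith
      · rw [hηdef] at h2; linarith
    have hmemIoo : c - η ∈ Set.Ioo l L := (hsub ⟨le_rfl, by linarith⟩).1
    -- the uniform-gap lemma on the spectral-free window
    have hδ : ∃ δ > 0, ∃ N, ∀ i ≥ N, h i ∈ Set.Icc (c-η) (c+η) → h i + δ ≤ h (i+1) := by
      by_contra hcon
      push_neg at hcon
      have hfreq : ∀ n : ℕ, ∃ᶠ i in atTop,
          h i ∈ Set.Icc (c-η) (c+η) ∧ h (i+1) < h i + 1/((n : ℝ)+1) := by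
        intro n
        rw [Filter.frequently_atTop]
        intro a
        obtain ⟨i, hia, h1, h2⟩ := hcon (1/((n : ℝ)+1)) (by positivity) a
        exact ⟨i, hia, h1, h2⟩
      obtain ⟨φ, hφ, hP⟩ := Filter.extraction_forall_of_frequently hfreq
      obtain ⟨ψ, hψ, w, hw1, ht1, ht2⟩ := extract A hstar R hv φ hφ
      have haI : Real.log ‖exp T w‖ ∈ Set.Icc (c-η) (c+η) := by
        constructor
        · exact ge_of_tendsto ht1 (Eventually.of_forall fun j => (hP (ψ j)).1.1)
        · exact le_of_tendsto ht1 (Eventually.of_forall fun j => (hP (ψ j)).1.2)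
      have hzero : Tendsto (fun j : ℕ => 1/((ψ j : ℝ)+1)) atTop (𝓝 0) :=
        tendsto_one_div_add_atTop_nhds_zero_nat.comp hψ.tendsto_atTop
      have hsub0 : Tendsto (fun j => (h (φ (ψ j) + 1) - h (φ (ψ j))) - 1/((ψ j : ℝ)+1))
          atTop (𝓝 ((Real.log ‖exp T (exp T w)‖ - Real.log ‖exp T w‖
            - Real.log ‖exp T w‖) - 0)) := (ht2.sub ht1).sub hzero
      have hle0 : Real.log ‖exp T (exp T w)‖ - Real.log ‖exp T w‖
          - Real.log ‖exp T w‖ - 0 ≤ 0 :=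
        le_of_tendsto hsub0 (Eventually.of_forall fun j => by
          have hj := (hP (ψ j)).2
          linarith)
      have hkey := key_ineq hTsa hw1
      have heqa : 2 * Real.log ‖exp T w‖ = Real.log ‖exp T (exp T w)‖ :=
        le_antisymm hkey (by linarith)
      obtain ⟨μ, hμmem, hμval⟩ := key_eq hTsa hw1 heqa
      have haeig : Real.log ‖exp T w‖ ∈ realEigs T := by rw [hμval]; exact hμmem
      exact (hsub haI).2 haeig
    -- almost-monotonicity
    have hmono : ∃ N, ∀ i ≥ N, h i - η ≤ h (i+1) := by
      by_contra hcon
      push_neg at hcon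
      have hfreq : ∃ᶠ i in atTop, h (i+1) < h i - η :=
        Filter.frequently_atTop.2 fun a => hcon a
      obtain ⟨φ, hφ, hP⟩ := Filter.extraction_of_frequently_atTop hfreq
      obtain ⟨ψ, hψ, w, hw1, ht1, ht2⟩ := extract A hstar R hv φ hφ
      have hsub0 : Tendsto (fun j => (h (φ (ψ j) + 1) - h (φ (ψ j))))
          atTop (𝓝 (Real.log ‖exp T (exp T w)‖ - Real.log ‖exp T w‖
            - Real.log ‖exp T w‖)) := ht2.sub ht1
      have hle0 : Real.log ‖exp T (exp T w)‖ - Real.log ‖exp T w‖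
          - Real.log ‖exp T w‖ ≤ -η :=
        le_of_tendsto hsub0 (Eventually.of_forall fun j => by
          have hj := hP (ψ j)
          linarith)
      have hkey := key_ineq hTsa hw1
      linarith
    obtain ⟨δ, hδ0, N1, hN1⟩ := hδ
    obtain ⟨N2, hN2⟩ := hmono
    have hinv : ∀ i ≥ max N1 N2, c - η < h i → c - η < h (i+1) := by
      intro i hi hhi
      by_cases hcase : h i ≤ c + η
      · have := hN1 i (le_trans (le_max_left _ _) hi) ⟨hhi.le, hcase⟩
        linarith
      · have := hN2 i (le_trans (le_max_right _ _) hi)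
        push_neg at hcase
        linarith
    have hfreq2 : ∃ᶠ k in atTop, c - η < h k :=
      frequently_lt_of_lt_limsup hcoa hmemIoo.2
    obtain ⟨i0, hi0N, hi0⟩ := Filter.frequently_atTop.1 hfreq2 (max N1 N2)
    have hall : ∀ k, i0 ≤ k → c - η < h k := by
      intro k hk
      induction k, hk using Nat.le_induction with
      | base => exact hi0
      | succ k hk ih => exact hinv k (le_trans hi0N hk) ih
    have hliminf : c - η ≤ l :=
      le_liminf_of_le hcob (eventually_atTop.2 ⟨i0, fun k hk => (hall k hk).le⟩)
    have hlow : l < c - η := hmemIoo.1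
    linarith
  have htend : Tendsto h atTop (𝓝 L) := tendsto_of_liminf_eq_limsup hlL rfl hba hbb
  -- Cesàro averages
  have hces : Tendsto (fun n : ℕ => (n : ℝ)⁻¹ * ∑ i ∈ Finset.range n, h i) atTop (𝓝 L) :=
    htend.cesaro
  have hces2 : Tendsto (fun n : ℕ => fseq R A v n / n) atTop (𝓝 L) := by
    have h0 : Tendsto (fun n : ℕ => fseq R A v 0 / (n : ℝ)) atTop (𝓝 0) :=
      tendsto_const_div_atTop_nhds_zero_nat _
    have hadd := hces.add h0
    rw [add_zero] at hadd
    refine hadd.congr fun n => ?_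
    have hsum : ∑ i ∈ Finset.range n, h i = fseq R A v n - fseq R A v 0 := by
      rw [hhdef]
      exact Finset.sum_range_sub (fun i => fseq R A v i) n
    rw [hsum, div_eq_mul_inv, div_eq_mul_inv]
    ring
  exact ⟨L, hLspec, htend, hces2⟩

end CSW
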